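/- For every ν ∈ (0,1] and every x > 0, the sum of the odd-indexed first-type fractional Poisson probabilities satisfies Σ_{k=0}^∞ x^{2k+1} E_{ν, (2k+1)ν+1}^{2k+2}(-x) = x · E_{ν, ν+1}(-2x). -/

import Mathlib

open Real

section auxiliary

lemma pow_sub_le_factorial (z : ℕ) : ∀ m, z ≤ m → z ^ (m - z) ≤ m.factorial := by
  intro m hm
  induction m, hm using Nat.le_induction with
  | base => simp [Nat.sub_self, Nat.one_le_iff_ne_zero, Nat.factorial_ne_zero]
  | succ m hm ih =>
    have h : m + 1 - z = (m - z) + 1 := by omega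
    rw [h, pow_succ, Nat.factorial_succ, mul_comm (m+1) _]
    exact Nat.mul_le_mul ih (by omega)

lemma choose_le_two_pow' (n j : ℕ) : n.choose j ≤ 2 ^ n := by
  rcases le_or_gt j n with h | h
  · calc n.choose j ≤ ∑ i ∈ Finset.range (n+1), n.choose i :=
        Finset.single_le_sum (fun i _ => Nat.zero_le _) (Finset.mem_range.2 (by omega))
      _ = 2 ^ n := Nat.sum_range_choose n
  · rw [Nat.choose_eq_zero_of_lt h]; exact Nat.zero_le _

lemma summable_ml_aux {ν : ℝ} (hν : 0 < ν) {y : ℝ} (hy : 0 ≤ y) :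
    Summable (fun n : ℕ => y ^ n / Real.Gamma (ν * n + 1)) := by
  obtain ⟨z, hz2, hzy⟩ : ∃ z : ℕ, 2 ≤ z ∧ 2 * max y 1 ≤ (z : ℝ) ^ ν := by
    refine ⟨max 2 ⌈(2 * max y 1) ^ ν⁻¹⌉₊, le_max_left _ _, ?_⟩
    have h0 : (0:ℝ) ≤ 2 * max y 1 := by positivity
    have h1 : (2 * max y 1) ^ ν⁻¹ ≤ ((max 2 ⌈(2 * max y 1) ^ ν⁻¹⌉₊ : ℕ) : ℝ) := by
      calc (2 * max y 1) ^ ν⁻¹ ≤ (⌈(2 * max y 1) ^ ν⁻¹⌉₊ : ℝ) := Nat.le_ceil _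
        _ ≤ _ := by exact_mod_cast Nat.le_max_right 2 _
    calc 2 * max y 1 = ((2 * max y 1) ^ ν⁻¹) ^ ν := (Real.rpow_inv_rpow h0 hν.ne').symm
      _ ≤ _ := Real.rpow_le_rpow (by positivity) h1 hν.le
  obtain ⟨N, hN⟩ : ∃ N : ℕ, ((z : ℝ) + 1) / ν ≤ N := exists_nat_ge _
  apply summable_of_isBigO_nat
    (summable_geometric_of_lt_one (by norm_num) (by norm_num : (1/2 : ℝ) < 1))
  rw [Asymptotics.isBigO_iff]
  refine ⟨(z : ℝ) ^ (z + 1), Filter.eventually_atTop.2 ⟨N, fun n hn => ?_⟩⟩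
  have hz0 : (0:ℝ) ≤ z := by positivity
  have hz1 : (1:ℝ) ≤ z := by exact_mod_cast (by omega : 1 ≤ z)
  have hνn : (z : ℝ) + 1 ≤ ν * n := by
    have h1 : ((z : ℝ) + 1) / ν ≤ (n : ℝ) := hN.trans (by exact_mod_cast hn)
    have := (div_le_iff₀ hν).mp h1
    linarith [this]
  set m := ⌊ν * n⌋₊ with hm
  have hm0 : (0:ℝ) ≤ ν * n := by positivity
  have hm1 : (m : ℝ) ≤ ν * n := Nat.floor_le hm0
  have hm2 : ν * n < (m : ℝ) + 1 := Nat.lt_floor_add_one _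
  have hzm : z + 1 ≤ m := by
    have h3 : (z : ℝ) < (m : ℝ) := by linarith
    have := Nat.cast_lt.mp h3
    omega
  have hΓpos : 0 < Real.Gamma (ν * n + 1) := Real.Gamma_pos_of_pos (by positivity)
  have hΓ : ((z:ℝ)) ^ (m - z) ≤ Real.Gamma (ν * n + 1) := by
    have h1 : Real.Gamma ((m : ℝ) + 1) ≤ Real.Gamma (ν * n + 1) := by
      apply Real.Gamma_strictMonoOn_Ici.monotoneOn
      · simp only [Set.mem_Ici]
        have : (3:ℝ) ≤ (m:ℝ) := by exact_mod_cast (by omega : 3 ≤ m)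
        linarith
      · simp only [Set.mem_Ici]; linarith
      · linarith
    have h3 : (z:ℕ) ^ (m - z) ≤ m.factorial := pow_sub_le_factorial z m (by omega)
    calc ((z:ℝ)) ^ (m - z) = (((z ^ (m - z) : ℕ)) : ℝ) := by push_cast; ring
      _ ≤ ((m.factorial : ℕ) : ℝ) := by exact_mod_cast h3
      _ = Real.Gamma ((m : ℝ) + 1) := (Real.Gamma_nat_eq_factorial m).symm
      _ ≤ _ := h1
  have key : (2 * max y 1) ^ n ≤ (z : ℝ) ^ (z + 1) * (z : ℝ) ^ (m - z) := by
    calc (2 * max y 1) ^ n ≤ ((z : ℝ) ^ ν) ^ n := pow_le_pow_left₀ (by positivity) hzy n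
      _ = (z : ℝ) ^ (ν * n) := by
          rw [← Real.rpow_natCast ((z:ℝ) ^ ν) n, ← Real.rpow_mul hz0]
      _ ≤ (z : ℝ) ^ ((m : ℝ) + 1) := Real.rpow_le_rpow_of_exponent_le hz1 hm2.le
      _ = (z : ℝ) ^ (m + 1 : ℕ) := by rw [← Real.rpow_natCast (z:ℝ) (m+1)]; norm_num
      _ = (z : ℝ) ^ (z + 1) * (z : ℝ) ^ (m - z) := by rw [← pow_add]; congr 1; omega
  have final : y ^ n * 2 ^ n ≤ (z : ℝ) ^ (z + 1) * Real.Gamma (ν * n + 1) := by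
    calc y ^ n * 2 ^ n = (y * 2) ^ n := (mul_pow y 2 n).symm
      _ ≤ (2 * max y 1) ^ n := by
          apply pow_le_pow_left₀ (by positivity)
          have := le_max_left y 1; linarith
      _ ≤ (z : ℝ) ^ (z + 1) * (z : ℝ) ^ (m - z) := key
      _ ≤ _ := by
          apply mul_le_mul_of_nonneg_left hΓ (by positivity)
  have h2n : (0:ℝ) < 2 ^ n := by positivity
  have hnorm1 : ‖y ^ n / Real.Gamma (ν * n + 1)‖ = y ^ n / Real.Gamma (ν * n + 1) := by
    rw [Real.norm_eq_abs, abs_of_nonneg]; positivity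
  have hnorm2 : ‖((1:ℝ)/2) ^ n‖ = ((1:ℝ)/2) ^ n := by
    rw [Real.norm_eq_abs, abs_of_nonneg]; positivity
  rw [hnorm1, hnorm2]
  calc y ^ n / Real.Gamma (ν * n + 1)
      ≤ ((z : ℝ) ^ (z + 1) * Real.Gamma (ν * n + 1) / 2 ^ n) / Real.Gamma (ν * n + 1) := by
        gcongr
        exact (le_div_iff₀ h2n).mpr final
    _ = (z : ℝ) ^ (z + 1) * (1/2) ^ n := by
        field_simp
        rw [← mul_pow]; norm_num


lemma sum_choose_odd (n : ℕ) (hn : 1 ≤ n) :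
    ∑ k ∈ Finset.range (n+1), (if 2*k+1 ≤ n then ((n.choose (2*k+1) : ℝ)) else 0)
      = 2 ^ (n-1) := by
  have h1 : ∑ k ∈ Finset.range (n+1), (if 2*k+1 ≤ n then ((n.choose (2*k+1) : ℝ)) else 0)
      = ∑ j ∈ Finset.range (n+1), (if j % 2 = 1 then ((n.choose j : ℝ)) else 0) := by
    rw [← Finset.sum_filter, ← Finset.sum_filter]
    apply Finset.sum_nbij' (fun k => 2*k+1) (fun j => j/2)
    · intro a ha
      simp only [Finset.mem_filter, Finset.mem_range] at ha ⊢
      omega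
    · intro a ha
      simp only [Finset.mem_filter, Finset.mem_range] at ha ⊢
      omega
    · intro a ha; omega
    · intro a ha
      simp only [Finset.mem_filter, Finset.mem_range] at ha
      omega
    · intro a ha; rfl
  rw [h1]
  have hA : ∑ j ∈ Finset.range (n+1), ((n.choose j : ℝ)) = 2 ^ n := by
    exact_mod_cast congrArg (Nat.cast : ℕ → ℝ) (Nat.sum_range_choose n)
  have hB : ∑ j ∈ Finset.range (n+1), ((-1 : ℝ)) ^ j * (n.choose j) = 0 := by
    have := Int.alternating_sum_range_choose_of_ne (n := n) (by omega)
    exact_mod_cast this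
  have h2 : ∀ j ∈ Finset.range (n+1), (if j % 2 = 1 then ((n.choose j : ℝ)) else 0)
      = ((n.choose j : ℝ) - (-1)^j * (n.choose j)) / 2 := by
    intro j _
    rcases Nat.even_or_odd j with he | ho
    · have he' := Nat.even_iff.mp he
      rw [if_neg (by omega), he.neg_one_pow]
      ring
    · rw [if_pos (Nat.odd_iff.mp ho), ho.neg_one_pow]
      ring
  rw [Finset.sum_congr rfl h2, ← Finset.sum_div, Finset.sum_sub_distrib, hA, hB, sub_zero]
  have : (2:ℝ) ^ n = 2 ^ (n-1) * 2 := by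
    rw [← pow_succ]; congr 1; omega
  rw [this]; ring

lemma sum_choose_odd_signed (n : ℕ) (hn : 1 ≤ n) :
    ∑ k ∈ Finset.range (n+1),
        (if 2*k+1 ≤ n then ((n.choose (2*k+1) : ℝ)) * (-1)^(n-(2*k+1)) else 0)
      = (-1)^(n-1) * 2 ^ (n-1) := by
  have h : ∀ k ∈ Finset.range (n+1),
      (if 2*k+1 ≤ n then ((n.choose (2*k+1) : ℝ)) * (-1)^(n-(2*k+1)) else 0)
        = (-1)^(n-1) * (if 2*k+1 ≤ n then ((n.choose (2*k+1) : ℝ)) else 0) := by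
    intro k _
    by_cases hk : 2*k+1 ≤ n
    · rw [if_pos hk, if_pos hk]
      have hsign : ((-1 : ℝ))^(n-(2*k+1)) = (-1)^(n-1) := by
        have h1 : n - 1 = (n - (2*k+1)) + 2*k := by omega
        rw [h1, pow_add, pow_mul, neg_one_sq, one_pow, mul_one]
      rw [hsign]; ring
    · rw [if_neg hk, if_neg hk, mul_zero]
  rw [Finset.sum_congr rfl h, ← Finset.mul_sum, sum_choose_odd n hn]


lemma prod_range_add_eq_ascFactorial (m r : ℕ) :
    ∏ i ∈ Finset.range r, (m + i) = m.ascFactorial r := by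
  induction r with
  | zero => simp
  | succ n ih => rw [Finset.prod_range_succ, ih, Nat.ascFactorial_succ, mul_comm]

/-- termwise identity -/
lemma term_eq (ν x : ℝ) (hν : 0 < ν) (k r : ℕ) :
    x ^ (2*k+1) * ((∏ i ∈ Finset.range r, ((2*(k:ℝ)+2) + i)) * (-x)^r /
      (r.factorial * Real.Gamma (ν * r + ((2*(k:ℝ)+1) * ν + 1))))
    = (((2*k+1+r).choose (2*k+1) : ℝ)) * (-1)^((2*k+1+r) - (2*k+1)) * x^(2*k+1+r) /
      Real.Gamma (ν * ((2*k+1+r : ℕ):ℝ) + 1) := by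
  have e1 : (2*k+1+r) - (2*k+1) = r := by omega
  have e2 : ν * ((2*k+1+r : ℕ):ℝ) + 1 = ν * r + ((2*(k:ℝ)+1) * ν + 1) := by
    push_cast; ring
  have e3 : ∏ i ∈ Finset.range r, ((2*(k:ℝ)+2) + i)
      = ((r.factorial * (2*k+1+r).choose (2*k+1) : ℕ) : ℝ) := by
    have h1 : ∀ i ∈ Finset.range r, (2*(k:ℝ)+2) + i = (((2*k+2+i : ℕ)):ℝ) := by
      intros i _; push_cast; ring
    rw [Finset.prod_congr rfl h1, ← Nat.cast_prod]
    congr 1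
    rw [prod_range_add_eq_ascFactorial,
      show 2*k+2 = (2*k+1)+1 from rfl, Nat.ascFactorial_eq_factorial_mul_choose]
    congr 1
    conv_lhs => rw [← Nat.choose_symm (show r ≤ 2*k+1+r by omega),
      show 2*k+1+r - r = 2*k+1 from by omega]
  have hΓpos : 0 < Real.Gamma (ν * ((2*k+1+r : ℕ):ℝ) + 1) :=
    Real.Gamma_pos_of_pos (by positivity)
  rw [e1, ← e2, e3]
  have hΓ : Real.Gamma (ν * ((2*k+1+r : ℕ):ℝ) + 1) ≠ 0 := ne_of_gt hΓpos
  have hr : ((r.factorial : ℝ)) ≠ 0 := by exact_mod_cast r.factorial_ne_zero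
  push_cast
  rw [neg_pow]
  field_simp
  ring


end auxiliary

/-- The generalized Mittag-Leffler function
`E_{α,β}^γ(x) = Σ_{r=0}^∞ (γ)_r x^r / (r! Γ(αr+β))`. -/
noncomputable def gml (α β γ x : ℝ) : ℝ :=
  ∑' r : ℕ, (∏ i ∈ Finset.range r, (γ + i)) * x ^ r /
    (r.factorial * Real.Gamma (α * r + β))

/-- The two-parameter Mittag-Leffler function `E_{α,β}(x) = Σ_{r=0}^∞ x^r / Γ(αr+β)`. -/
noncomputable def ml (α β x : ℝ) : ℝ :=
  ∑' r : ℕ, x ^ r / Real.Gamma (α * r + β)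

set_option maxHeartbeats 1000000 in
/-- For `ν ∈ (0,1]` and `x > 0`:
`Σ_{k=0}^∞ x^(2k+1) E_{ν,(2k+1)ν+1}^(2k+2)(-x) = x E_{ν,ν+1}(-2x)`. -/
theorem odd_probabilities_sum (ν x : ℝ) (hν : 0 < ν) (hν1 : ν ≤ 1) (hx : 0 < x) :
    ∑' k : ℕ, x ^ (2 * k + 1) * gml ν ((2 * k + 1) * ν + 1) (2 * k + 2) (-x)
      = x * ml ν (ν + 1) (-(2 * x)) := by
  have hΓpos : ∀ n : ℕ, 0 < Real.Gamma (ν * n + 1) := fun n =>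
    Real.Gamma_pos_of_pos (by positivity)
  set F : ℕ × ℕ → ℝ := fun p =>
    if 2*p.2+1 ≤ p.1 then
      ((p.1.choose (2*p.2+1) : ℝ)) * (-1)^(p.1-(2*p.2+1)) * x^p.1 /
        Real.Gamma (ν*p.1+1)
    else 0 with hF
  set H : ℕ → ℝ := fun n =>
    if 1 ≤ n then (-1)^(n-1) * 2^(n-1) * x^n / Real.Gamma (ν*n+1) else 0 with hH
  -- Step 1
  have step1 : ∀ k : ℕ,
      x ^ (2 * k + 1) * gml ν ((2 * k + 1) * ν + 1) (2 * k + 2) (-x)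
        = ∑' n, F (n, k) := by
    intro k
    rw [gml, ← tsum_mul_left]
    have h1 : ∀ r : ℕ,
        x ^ (2*k+1) * ((∏ i ∈ Finset.range r, ((2*(k:ℝ)+2) + i)) * (-x)^r /
          (r.factorial * Real.Gamma (ν * r + ((2*(k:ℝ)+1) * ν + 1))))
          = F (2*k+1+r, k) := by
      intro r
      rw [term_eq ν x hν k r, hF]
      dsimp only
      rw [if_pos (by omega : 2*k+1 ≤ 2*k+1+r)]
    rw [tsum_congr h1]
    have hsupp : Function.support (fun n => F (n, k)) ⊆ Set.range (fun r => 2*k+1+r) := by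
      intro n hn
      rcases le_or_gt (2*k+1) n with h | h
      · exact ⟨n - (2*k+1), by show 2*k+1+(n-(2*k+1)) = n; omega⟩
      · exfalso
        apply hn
        rw [hF]
        dsimp only
        rw [if_neg (by omega)]
    exact Function.Injective.tsum_eq (f := fun n => F (n, k))
      (g := fun r => 2*k+1+r) (add_right_injective (2*k+1)) hsupp
  -- Step 2 : summability
  have hFsum : Summable F := by
    set G : ℕ × ℕ → ℝ := fun p =>
      if p.2 ≤ p.1 then (2*x)^p.1 / Real.Gamma (ν*p.1+1) else 0 with hG
    have hG0 : 0 ≤ G := by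
      intro p
      dsimp [G]
      split
      · positivity
      · exact le_refl 0
    have hFG : ∀ p, |F p| ≤ G p := by
      rintro ⟨n, k⟩
      dsimp [F, G]
      by_cases h : 2*k+1 ≤ n
      · rw [if_pos h, if_pos (by omega : k ≤ n)]
        have habs : |((n.choose (2*k+1):ℝ)) * (-1)^(n-(2*k+1)) * x^n /
            Real.Gamma (ν*n+1)|
            = (n.choose (2*k+1):ℝ) * x^n / Real.Gamma (ν*n+1) := by
          rw [abs_div, abs_mul, abs_mul, abs_pow, abs_neg, abs_one, one_pow, mul_one,
            Nat.abs_cast, abs_pow, abs_of_pos hx, abs_of_pos (hΓpos n)]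
        rw [habs, mul_pow]
        rw [div_le_div_iff_of_pos_right (hΓpos n)]
        apply mul_le_mul_of_nonneg_right ?_ (by positivity)
        exact_mod_cast choose_le_two_pow' n (2*k+1)
      · rw [if_neg h]
        simp only [abs_zero]
        split
        · positivity
        · exact le_refl 0
    have hGsum : Summable G := by
      rw [summable_prod_of_nonneg hG0]
      constructor
      · intro n
        apply summable_of_ne_finset_zero (s := Finset.range (n+1))
        intro k hk
        simp only [Finset.mem_range, not_lt] at hk
        dsimp [G]
        rw [if_neg (by omega)]
      · have hev : ∀ n : ℕ, ∑' k, G (n, k) = (n+1 : ℕ) * ((2*x)^n / Real.Gamma (ν*n+1)) := by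
          intro n
          rw [tsum_eq_sum (s := Finset.range (n+1))
            (fun k hk => by
              simp only [Finset.mem_range, not_lt] at hk
              dsimp [G]; rw [if_neg (by omega)])]
          have hc : ∀ k ∈ Finset.range (n+1), G (n, k)
              = (2*x)^n / Real.Gamma (ν*n+1) := by
            intro k hk
            simp only [Finset.mem_range] at hk
            dsimp [G]
            rw [if_pos (by omega)]
          rw [Finset.sum_congr rfl hc, Finset.sum_const, Finset.card_range, nsmul_eq_mul]
        apply Summable.of_nonneg_of_le
          (g := fun n : ℕ => ∑' k, G (n, k))
          (f := fun n : ℕ => (4*x)^n / Real.Gamma (ν*n+1))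
        · intro n
          rw [hev n]
          positivity
        · intro n
          rw [hev n]
          have h1 : ((n:ℝ)+1) ≤ 2^n := by
            exact_mod_cast (Nat.lt_two_pow_self : n < 2 ^ n)
          have h2 : ((n:ℝ)+1) * (2*x)^n ≤ (4*x)^n := by
            have h3 : ((4:ℝ)*x)^n = 2^n * (2*x)^n := by
              rw [← mul_pow]; ring_nf
            rw [h3]
            exact mul_le_mul_of_nonneg_right h1 (by positivity)
          calc ((n+1 : ℕ) : ℝ) * ((2*x)^n / Real.Gamma (ν*n+1))
              = (((n:ℝ)+1) * (2*x)^n) / Real.Gamma (ν*n+1) := by push_cast; ring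
            _ ≤ (4*x)^n / Real.Gamma (ν*n+1) := by
                rw [div_le_div_iff_of_pos_right (hΓpos n)]
                exact h2
        · exact summable_ml_aux hν (by positivity : (0:ℝ) ≤ 4*x)
    exact summable_abs_iff.mp
      (Summable.of_nonneg_of_le (fun p => abs_nonneg _) hFG hGsum)
  -- Step 4
  have step4 : ∀ n : ℕ, ∑' k, F (n, k) = H n := by
    intro n
    rw [tsum_eq_sum (s := Finset.range (n+1))
      (fun k hk => by
        simp only [Finset.mem_range, not_lt] at hk
        dsimp [F]; rw [if_neg (by omega)])]
    rcases Nat.eq_zero_or_pos n with h0 | h1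
    · subst h0
      rw [show (0:ℕ)+1 = 1 from rfl, Finset.range_one, Finset.sum_singleton]
      dsimp [F, H]
    · have h2 : ∀ k ∈ Finset.range (n+1), F (n, k)
          = (if 2*k+1 ≤ n then ((n.choose (2*k+1):ℝ)) * (-1)^(n-(2*k+1)) else 0)
            * (x^n / Real.Gamma (ν*n+1)) := by
        intro k _
        dsimp [F]
        split
        · ring
        · rw [zero_mul]
      rw [Finset.sum_congr rfl h2, ← Finset.sum_mul, sum_choose_odd_signed n h1]
      dsimp [H]
      rw [if_pos (show 1 ≤ n by omega)]
      ring
  -- Step 5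
  have step5 : x * ml ν (ν + 1) (-(2 * x)) = ∑' n, H n := by
    rw [ml, ← tsum_mul_left]
    have h1 : ∀ m : ℕ, x * ((-(2*x))^m / Real.Gamma (ν*m + (ν+1))) = H (m+1) := by
      intro m
      dsimp [H]
      push_cast
      rw [show ν*((m:ℝ)+1)+1 = ν*(m:ℝ)+(ν+1) by ring]
      rw [neg_pow]
      ring
    rw [tsum_congr h1]
    have hsupp : Function.support H ⊆ Set.range (fun m => m+1) := by
      intro n hn
      rcases Nat.eq_zero_or_pos n with h0 | h1
      · exfalso
        apply hn
        rw [hH, h0]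
        dsimp only
        rw [if_neg (by omega)]
      · exact ⟨n - 1, by show n-1+1 = n; omega⟩
    exact Function.Injective.tsum_eq (f := H) (g := fun m => m+1)
      (add_left_injective 1) hsupp
  calc ∑' k : ℕ, x ^ (2 * k + 1) * gml ν ((2 * k + 1) * ν + 1) (2 * k + 2) (-x)
      = ∑' k : ℕ, ∑' n : ℕ, F (n, k) := tsum_congr step1
    _ = ∑' n : ℕ, ∑' k : ℕ, F (n, k) := hFsum.tsum_comm
    _ = ∑' n : ℕ, H n := tsum_congr step4
    _ = x * ml ν (ν + 1) (-(2 * x)) := step5.symm
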